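/- If H is a triangle-free graph with at least three vertices and D is the set of vertices of H of degree at least two, then the intersection graph of the maximal induced stars of H is isomorphic to the square of the induced subgraph H[D]. -/

import Mathlib

set_option linter.unusedSectionVars false
set_option linter.unusedVariables false


open SimpleGraph

/-- An induced star of `H` with center `v` and leaf set `L`: `L` is a nonempty
independent set of neighbors of `v`. -/
def IsStar {V : Type*} (H : SimpleGraph V) (v : V) (L : Set V) : Prop :=
  L.Nonempty ∧ (∀ u ∈ L, H.Adj v u) ∧ ∀ u ∈ L, ∀ w ∈ L, ¬ H.Adj u w

/-- `S` is the vertex set of an induced star of `H`. -/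
def IsStarSet {V : Type*} (H : SimpleGraph V) (S : Set V) : Prop :=
  ∃ v L, IsStar H v L ∧ S = insert v L

/-- `S` is the vertex set of a maximal induced star of `H`. -/
def IsMaxStarSet {V : Type*} (H : SimpleGraph V) (S : Set V) : Prop :=
  IsStarSet H S ∧ ∀ T, IsStarSet H T → S ⊆ T → S = T

/-- The set of (vertex sets of) maximal induced stars of `H`. -/
def maxStars {V : Type*} (H : SimpleGraph V) : Set (Set V) := {S | IsMaxStarSet H S}

/-- The star graph of `H`: the intersection graph of the maximal induced stars of `H`. -/
def starGraph {V : Type*} (H : SimpleGraph V) : SimpleGraph ↥(maxStars H) :=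
  SimpleGraph.fromRel fun S T => ((S : Set V) ∩ (T : Set V)).Nonempty

/-- The square of a graph: adjacency iff distance is positive and at most 2. -/
def squareGraph {V : Type*} (G : SimpleGraph V) : SimpleGraph V :=
  SimpleGraph.fromRel fun u v => G.Reachable u v ∧ G.dist u v ≤ 2

section Aux
variable {V : Type*} [Fintype V] {H : SimpleGraph V} [DecidableRel H.Adj]

def starOf (H : SimpleGraph V) (v : V) : Set V := insert v (H.neighborSet v)

lemma not_adj_of_cf (hH : H.CliqueFree 3) {v u w : V} (h1 : H.Adj v u) (h2 : H.Adj v w) :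
    ¬ H.Adj u w := by
  classical
  exact fun h => hH {v, u, w} (is3Clique_triple_iff.mpr ⟨h1, h2, h⟩)

lemma exists_other_neighbor {v : V} (hv : 2 ≤ H.degree v) (w : V) :
    ∃ u, H.Adj v u ∧ u ≠ w := by
  obtain ⟨u, hu, hne⟩ := Finset.exists_mem_ne
    (s := H.neighborFinset v) (by rw [card_neighborFinset_eq_degree]; omega) w
  exact ⟨u, by simpa using hu, hne⟩

lemma two_le_degree {x u v : V} (h1 : H.Adj x u) (h2 : H.Adj x v) (huv : u ≠ v) :
    2 ≤ H.degree x := by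
  rw [← card_neighborFinset_eq_degree]
  have : 1 < (H.neighborFinset x).card :=
    Finset.one_lt_card.mpr ⟨u, by simpa using h1, v, by simpa using h2, huv⟩
  omega

lemma eq_of_degree_le_one {a b x : V} (h : H.degree a ≤ 1) (hb : H.Adj a b) (hx : H.Adj a x) :
    x = b := by
  by_contra hne
  have := two_le_degree hx hb hne
  omega

lemma isStarSet_starOf (hH : H.CliqueFree 3) {v : V} (hv : 0 < H.degree v) :
    IsStarSet H (starOf H v) := by
  obtain ⟨w, hw⟩ := H.degree_pos_iff_exists_adj v |>.mp hv
  exact ⟨v, H.neighborSet v, ⟨⟨w, hw⟩, fun u hu => hu, fun u hu w hw => not_adj_of_cf hH hu hw⟩, rfl⟩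

lemma mem_starOf_iff {v x : V} : x ∈ starOf H v ↔ x = v ∨ H.Adj v x := Iff.rfl

lemma isMaxStarSet_starOf (hH : H.CliqueFree 3) {v : V} (hv : 2 ≤ H.degree v) :
    IsMaxStarSet H (starOf H v) := by
  refine ⟨isStarSet_starOf hH (by omega), ?_⟩
  rintro T ⟨w, L, ⟨hLne, hLadj, hLind⟩, rfl⟩ hsub
  rcases eq_or_ne v w with rfl | hvw
  · -- same center
    have h1 : H.neighborSet v ⊆ L := by
      intro u hu
      rcases hsub (Set.mem_insert_of_mem _ hu) with h | h
      · exact absurd (h ▸ hu) (H.irrefl)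
      · exact h
    have h2 : L ⊆ H.neighborSet v := fun u hu => hLadj u hu
    rw [starOf, Set.Subset.antisymm h1 h2]
  · -- different center: v ∈ L
    exfalso
    have hvL : v ∈ L := by
      rcases hsub (Set.mem_insert _ _) with h | h
      · exact absurd h hvw
      · exact h
    obtain ⟨u, hu, hune⟩ := exists_other_neighbor hv w
    have huL : u ∈ L := by
      rcases hsub (Set.mem_insert_of_mem _ hu) with h | h
      · exact absurd h hune
      · exact h
    exact hLind v hvL u huL hu

lemma walk_stuck {v u : V} (hv : ∀ x, H.Adj v x → x = u) (hu : ∀ x, H.Adj u x → x = v) :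
    ∀ {a z : V}, H.Walk a z → a = v ∨ a = u → z = v ∨ z = u
  | _, _, Walk.nil, h => h
  | _, _, Walk.cons hadj p, h => by
      rcases h with rfl | rfl
      · exact walk_stuck hv hu p (Or.inr (hv _ hadj))
      · exact walk_stuck hv hu p (Or.inl (hu _ hadj))

lemma neighbor_deg_two (hconn : H.Connected) (hcard : 3 ≤ Fintype.card V)
    {v u : V} (hadj : H.Adj v u) (hdv : H.degree v ≤ 1) : 2 ≤ H.degree u := by
  classical
  by_contra hdu
  push_neg at hdu
  have hv : ∀ x, H.Adj v x → x = u := fun x hx => eq_of_degree_le_one hdv hadj hx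
  have hu : ∀ x, H.Adj u x → x = v := fun x hx =>
    eq_of_degree_le_one (by omega) hadj.symm hx
  have : (Finset.univ : Finset V) ⊆ {v, u} := by
    intro z _
    have := walk_stuck hv hu (hconn v z).some (Or.inl rfl)
    simpa using this
  have := Finset.card_le_card this
  have h2 : ({v, u} : Finset V).card ≤ 2 :=
    (Finset.card_insert_le _ _).trans (by simp)
  rw [Finset.card_univ] at this
  omega

lemma maxStar_eq (hH : H.CliqueFree 3) (hconn : H.Connected) (hcard : 3 ≤ Fintype.card V)
    {S : Set V} (hS : IsMaxStarSet H S) : ∃ v, 2 ≤ H.degree v ∧ S = starOf H v := by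
  obtain ⟨⟨v, L, ⟨hLne, hLadj, hLind⟩, rfl⟩, hmax⟩ := hS
  -- first: degree v ≥ 2
  have hdv : 2 ≤ H.degree v := by
    by_contra hdv
    push_neg at hdv
    obtain ⟨u, huL⟩ := hLne
    have hadj : H.Adj v u := hLadj u huL
    have hdu : 2 ≤ H.degree u := neighbor_deg_two hconn hcard hadj (by omega)
    have hsub : insert v L ⊆ starOf H u := by
      intro x hx
      rcases hx with rfl | hx
      · exact Or.inr hadj.symm
      · have := hLadj x hx
        have hxu : x = u := eq_of_degree_le_one (by omega) hadj this
        exact Or.inl hxu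
    have heq := hmax _ (isStarSet_starOf hH (by omega)) hsub
    obtain ⟨x, hxadj, hxne⟩ := exists_other_neighbor hdu v
    have hxS : x ∈ insert v L := heq ▸ (Or.inr hxadj : x ∈ starOf H u)
    rcases hxS with rfl | hxL
    · exact hxne rfl
    · -- x ∈ L so x adjacent to v, so x = u by degree, contradiction with irrefl
      have : x = u := eq_of_degree_le_one (by omega) hadj (hLadj x hxL)
      exact H.irrefl (this ▸ hxadj)
  refine ⟨v, hdv, ?_⟩
  -- now show L = neighborSet v
  have hL : L = H.neighborSet v := by
    apply Set.Subset.antisymm (fun u hu => hLadj u hu)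
    intro u hu
    by_contra huL
    have hT : IsStarSet H (insert v (insert u L)) := by
      refine ⟨v, insert u L, ⟨⟨u, Or.inl rfl⟩, ?_, ?_⟩, rfl⟩
      · rintro x (rfl | hx)
        · exact hu
        · exact hLadj x hx
      · rintro x (rfl | hx) y (rfl | hy)
        · exact H.irrefl
        · exact not_adj_of_cf hH hu (hLadj y hy)
        · exact not_adj_of_cf hH (hLadj x hx) hu
        · exact hLind x hx y hy
    have heq := hmax _ hT (Set.insert_subset_insert (Set.subset_insert _ _))
    have : u ∈ insert v L := heq ▸ (Or.inr (Or.inl rfl) : u ∈ insert v (insert u L))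
    rcases this with rfl | h
    · exact H.irrefl hu
    · exact huL h
  rw [hL]; rfl

lemma starOf_inj (hH : H.CliqueFree 3) {u v : V} (hu : 2 ≤ H.degree u)
    (heq : starOf H u = starOf H v) : u = v := by
  by_contra hne
  have hvmem : v ∈ starOf H u := heq ▸ (Or.inl rfl : v ∈ starOf H v)
  have hadj : H.Adj u v := by
    rcases hvmem with h | h
    · exact absurd h.symm hne
    · exact h
  obtain ⟨x, hx, hxv⟩ := exists_other_neighbor hu v
  have hxmem : x ∈ starOf H v := heq ▸ (Or.inr hx : x ∈ starOf H u)
  rcases hxmem with rfl | h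
  · exact hxv rfl
  · exact not_adj_of_cf hH hx.symm h.symm hadj

lemma key (hH : H.CliqueFree 3) (u v : ↥{v : V | 2 ≤ H.degree v}) (hne : u ≠ v) :
    (starOf H ↑u ∩ starOf H ↑v).Nonempty ↔
      ((H.induce {v : V | 2 ≤ H.degree v}).Reachable u v ∧
        (H.induce {v : V | 2 ≤ H.degree v}).dist u v ≤ 2) := by
  set G := H.induce {v : V | 2 ≤ H.degree v} with hG
  have hcne : (↑u : V) ≠ ↑v := fun h => hne (Subtype.ext h)
  constructor
  · rintro ⟨x, hxu, hxv⟩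
    rcases hxu with rfl | hxu
    · rcases hxv with h | hxv
      · exact absurd h hcne
      · have hadj : G.Adj u v := hxv.symm
        exact ⟨hadj.reachable, le_trans (G.dist_le hadj.toWalk) (by simp)⟩
    · rcases hxv with rfl | hxv
      · have hadj : G.Adj u v := hxu
        exact ⟨hadj.reachable, le_trans (G.dist_le hadj.toWalk) (by simp)⟩
      · have hx : x ∈ {v : V | 2 ≤ H.degree v} := two_le_degree hxu.symm hxv.symm hcne
        have h1 : G.Adj u ⟨x, hx⟩ := hxu
        have h2 : G.Adj ⟨x, hx⟩ v := hxv.symm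
        exact ⟨⟨Walk.cons h1 (Walk.cons h2 Walk.nil)⟩,
          le_trans (G.dist_le (Walk.cons h1 (Walk.cons h2 Walk.nil))) (by simp)⟩
  · rintro ⟨hreach, hdist⟩
    obtain ⟨p, hp⟩ := hreach.exists_walk_length_eq_dist
    have hlen : p.length ≤ 2 := hp ▸ hdist
    cases p with
    | nil => exact absurd rfl hne
    | @cons _ b _ h q =>
      cases q with
      | nil =>
        have hadj : H.Adj ↑u ↑v := h
        exact ⟨↑v, Set.mem_inter (Set.mem_insert_of_mem _ hadj) (Set.mem_insert _ _)⟩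
      | @cons _ c _ h' r =>
        cases r with
        | nil =>
          have h1 : H.Adj ↑u ↑b := h
          have h2 : H.Adj ↑b ↑v := h'
          exact ⟨↑b, Set.mem_inter (Set.mem_insert_of_mem _ h1)
            (Set.mem_insert_of_mem _ h2.symm)⟩
        | cons h'' r' =>
          simp [Walk.length_cons] at hlen

end Aux


/-- For a connected triangle-free graph `H` on at least three vertices, the star graph
of `H` is isomorphic to the square of the subgraph induced on the vertices of degree
at least two. -/
theorem stmt1 {V : Type*} [Fintype V] (H : SimpleGraph V) [DecidableRel H.Adj]
    (hH : H.CliqueFree 3) (hconn : H.Connected) (hcard : 3 ≤ Fintype.card V) :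
    Nonempty (_root_.starGraph H ≃g squareGraph (H.induce {v : V | 2 ≤ H.degree v})) := by
  classical
  let f : ↥{v : V | 2 ≤ H.degree v} → ↥(maxStars H) :=
    fun v => ⟨starOf H ↑v, isMaxStarSet_starOf hH v.2⟩
  have hinj : Function.Injective f := fun a b hab =>
    Subtype.ext (starOf_inj hH a.2 (congrArg Subtype.val hab))
  have hsurj : Function.Surjective f := by
    rintro ⟨S, hS⟩
    obtain ⟨v, hv, rfl⟩ := maxStar_eq hH hconn hcard hS
    exact ⟨⟨v, hv⟩, rfl⟩
  let e := Equiv.ofBijective f ⟨hinj, hsurj⟩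
  have hrel : ∀ a b : ↥{v : V | 2 ≤ H.degree v},
      (_root_.starGraph H).Adj (e a) (e b) ↔
        (squareGraph (H.induce {v : V | 2 ≤ H.degree v})).Adj a b := by
    intro a b
    rw [_root_.starGraph, squareGraph, fromRel_adj, fromRel_adj]
    constructor
    · rintro ⟨hfne, h | h⟩ <;>
      · have hne : a ≠ b := fun hh => hfne (congrArg e hh)
        refine ⟨hne, Or.inl ((key hH a b hne).mp ?_)⟩
        first
        | exact h
        | rwa [Set.inter_comm] at h
    · rintro ⟨hne, h | h⟩
      · exact ⟨fun hh => hne (e.injective hh), Or.inl ((key hH a b hne).mpr h)⟩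
      · refine ⟨fun hh => hne (e.injective hh), Or.inl ((key hH a b hne).mpr ?_)⟩
        exact ⟨h.1.symm, by rw [SimpleGraph.dist_comm]; exact h.2⟩
  exact ⟨(RelIso.mk e fun {a b} => hrel a b :
    squareGraph (H.induce {v : V | 2 ≤ H.degree v}) ≃g _root_.starGraph H).symm⟩
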